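/- arXiv:1005.1697 — 2 statements merged into one kernel-verified Lean document; each statement's English description precedes it below -/
import Mathlib

section
/- Let m be a positive integer and define I(u) = -(i/m) ∫₀^{2πm} sin(t)/√(1 - u·e^{i t/m}) dt for u in a disc D of radius r₁ < 1 around 0 in ℂ. Then I(u) = π·b_m·u^m, where b_m is the m-th Taylor coefficient at 0 of (1-w)^{-1/2}; in particular I(u) = c·u^m with c ≠ 0. -/
open Real

/-- The `k`-th Taylor coefficient at `0` of the principal branch of `(1-w)^{-1/2}`. -/
noncomputable def binomCoeffHalf (k : ℕ) : ℂ :=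
  (-1) ^ k * (∏ j ∈ Finset.range k, (-(1/2 : ℂ) - (j : ℂ))) / (Nat.factorial k : ℂ)




lemma bch_zero : binomCoeffHalf 0 = 1 := by simp [binomCoeffHalf]

lemma bch_succ (k : ℕ) :
    ((k : ℂ) + 1) * binomCoeffHalf (k + 1) = ((k : ℂ) + 1/2) * binomCoeffHalf k := by
  have hk : ((Nat.factorial k : ℂ)) ≠ 0 := Nat.cast_ne_zero.2 (Nat.factorial_ne_zero k)
  have hk1 : ((k : ℂ) + 1) ≠ 0 := by
    exact_mod_cast Nat.cast_add_one_ne_zero (R := ℂ) k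
  simp only [binomCoeffHalf, Finset.prod_range_succ, Nat.factorial_succ]
  push_cast
  field_simp
  ring

lemma bch_ne_zero (k : ℕ) : binomCoeffHalf k ≠ 0 := by
  have hk : ((Nat.factorial k : ℂ)) ≠ 0 := Nat.cast_ne_zero.2 (Nat.factorial_ne_zero k)
  apply div_ne_zero
  · apply mul_ne_zero (pow_ne_zero _ (by norm_num))
    apply Finset.prod_ne_zero_iff.2
    intro j _
    intro h
    have : (-(1/2 : ℂ) - j).re = 0 := by rw [h]; simp
    simp [Complex.sub_re] at this
    have : (j : ℝ) = -(1/2) := by push_cast at this ⊢; linarith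
    have h0 : (0:ℝ) ≤ (j:ℝ) := Nat.cast_nonneg j
    rw [this] at h0; norm_num at h0
  · exact hk

lemma bch_norm_le_one (k : ℕ) : ‖binomCoeffHalf k‖ ≤ 1 := by
  induction k with
  | zero => simp [bch_zero]
  | succ k ih =>
    have hrec := bch_succ k
    have hk1 : ((k : ℂ) + 1) ≠ 0 := by
      exact_mod_cast Nat.cast_add_one_ne_zero (R := ℂ) k
    have : binomCoeffHalf (k+1) = (((k : ℂ) + 1/2) / ((k : ℂ) + 1)) * binomCoeffHalf k := by
      field_simp
      linear_combination 2*hrec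
    rw [this, norm_mul]
    have h1 : ‖((k : ℂ) + 1/2) / ((k : ℂ) + 1)‖ ≤ 1 := by
      rw [norm_div]
      apply div_le_one_of_le₀
      · have e1 : ((k : ℂ) + 1/2) = ((k + 1/2 : ℝ) : ℂ) := by push_cast; ring
        have e2 : ((k : ℂ) + 1) = ((k + 1 : ℝ) : ℂ) := by push_cast; ring
        rw [e1, e2, Complex.norm_real, Complex.norm_real]
        rw [Real.norm_of_nonneg (by positivity), Real.norm_of_nonneg (by positivity)]
        linarith
      · positivity
    calc ‖((k : ℂ) + 1/2) / ((k : ℂ) + 1)‖ * ‖binomCoeffHalf k‖ ≤ 1 * 1 :=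
          mul_le_mul h1 ih (norm_nonneg _) (by linarith)
      _ = 1 := by norm_num


lemma bch_sum (n : ℕ) :
    ∑ i ∈ Finset.range (n+1), binomCoeffHalf i * binomCoeffHalf (n - i) = 1 := by
  set b := binomCoeffHalf with hb
  have refl1 : ∀ (N : ℕ), ∑ i ∈ Finset.range (N+1), ((N - i : ℕ) : ℂ) * (b i * b (N - i))
      = ∑ i ∈ Finset.range (N+1), (i : ℂ) * (b i * b (N - i)) := by
    intro N
    rw [← Finset.sum_range_reflect (fun i => ((N - i : ℕ) : ℂ) * (b i * b (N - i))) (N+1)]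
    apply Finset.sum_congr rfl
    intro i hi
    have hi' : i ≤ N := Nat.lt_succ_iff.mp (Finset.mem_range.mp hi)
    have h1 : N + 1 - 1 - i = N - i := by omega
    have h2 : N - (N - i) = i := by omega
    rw [h1, h2]
    ring
  have expand : ∀ N : ℕ, ((N : ℂ)) * ∑ i ∈ Finset.range (N+1), b i * b (N - i)
      = 2 * ∑ i ∈ Finset.range (N+1), (i : ℂ) * (b i * b (N - i)) := by
    intro N
    rw [Finset.mul_sum]
    have hc : ∀ i ∈ Finset.range (N+1), (N : ℂ) * (b i * b (N - i))
        = (i : ℂ) * (b i * b (N - i)) + ((N - i : ℕ) : ℂ) * (b i * b (N - i)) := by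
      intro i hi
      have hi' : i ≤ N := Nat.lt_succ_iff.mp (Finset.mem_range.mp hi)
      have hcast : ((N - i : ℕ) : ℂ) = (N : ℂ) - (i : ℂ) := by
        rw [Nat.cast_sub hi']
      rw [hcast]; ring
    rw [Finset.sum_congr rfl hc, Finset.sum_add_distrib, refl1 N]
    ring
  induction n with
  | zero => simp [hb, bch_zero]
  | succ n ih =>
    have hSn : ∑ i ∈ Finset.range (n+1), b i * b (n-i) = 1 := ih
    have hisum : ∑ i ∈ Finset.range (n+1), (i:ℂ) * (b i * b (n - i)) = (n:ℂ)/2 := by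
      have h := expand n
      rw [hSn, mul_one] at h
      rw [eq_div_iff (by norm_num : (2:ℂ) ≠ 0), h]
      ring
    have e2 : ∑ i ∈ Finset.range (n+1+1), (i : ℂ) * (b i * b (n+1-i))
        = ∑ i ∈ Finset.range (n+1), (((i:ℂ)+1/2) * (b i * b (n-i))) := by
      rw [Finset.sum_range_succ' (fun i => (i:ℂ) * (b i * b (n+1-i))) (n+1)]
      simp only [Nat.cast_zero, zero_mul, add_zero, Nat.succ_sub_succ_eq_sub]
      apply Finset.sum_congr rfl
      intro i hi
      have hrec := bch_succ i
      push_cast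
      linear_combination (b (n-i)) * hrec
    have key : ((n:ℂ)+1) * ∑ i ∈ Finset.range (n+1+1), b i * b (n+1-i) = (n:ℂ)+1 := by
      have e1 := expand (n+1)
      have hcst : (((n+1:ℕ)):ℂ) = (n:ℂ)+1 := by push_cast; ring
      rw [hcst] at e1
      rw [e1, e2]
      have hsplit : ∑ i ∈ Finset.range (n+1), (((i:ℂ)+1/2) * (b i * b (n-i)))
          = ∑ i ∈ Finset.range (n+1), ((i:ℂ) * (b i * b (n-i)) + (1/2) * (b i * b (n-i))) := by
        apply Finset.sum_congr rfl; intro i _; ring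
      rw [hsplit, Finset.sum_add_distrib, hisum, ← Finset.mul_sum, hSn]
      ring
    have hne : ((n:ℂ)+1) ≠ 0 := Nat.cast_add_one_ne_zero n
    have := mul_left_cancel₀ hne (key.trans (by ring : ((n:ℂ)+1) = ((n:ℂ)+1) * 1))
    simpa using this


noncomputable def gfun (w : ℂ) : ℂ := ∑' k, binomCoeffHalf k * w ^ k

lemma bch_summable_norm {w : ℂ} (hw : ‖w‖ < 1) :
    Summable (fun k => ‖binomCoeffHalf k * w ^ k‖) := by
  apply Summable.of_nonneg_of_le (fun k => norm_nonneg _) (fun k => ?_)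
    (summable_geometric_of_lt_one (norm_nonneg w) hw)
  rw [norm_mul, norm_pow]
  calc ‖binomCoeffHalf k‖ * ‖w‖ ^ k ≤ 1 * ‖w‖ ^ k := by
        apply mul_le_mul_of_nonneg_right (bch_norm_le_one k) (by positivity)
    _ = ‖w‖ ^ k := one_mul _

lemma bch_summable {w : ℂ} (hw : ‖w‖ < 1) :
    Summable (fun k => binomCoeffHalf k * w ^ k) :=
  (bch_summable_norm hw).of_norm

lemma one_sub_ne_zero {w : ℂ} (hw : ‖w‖ < 1) : 1 - w ≠ 0 := by
  intro h
  have : w = 1 := by linear_combination -h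
  rw [this] at hw; simp at hw

lemma one_sub_re_pos {w : ℂ} (hw : ‖w‖ < 1) : 0 < (1 - w).re := by
  have h1 : w.re ≤ ‖w‖ := by
    calc w.re ≤ |w.re| := le_abs_self _
      _ ≤ ‖w‖ := Complex.abs_re_le_norm w
  simp only [Complex.sub_re, Complex.one_re]
  linarith

lemma sqrt_mul_self {w : ℂ} (hw : ‖w‖ < 1) :
    (1 - w) ^ ((1:ℂ)/2) * (1 - w) ^ ((1:ℂ)/2) = 1 - w := by
  rw [← Complex.cpow_add _ _ (one_sub_ne_zero hw)]
  norm_num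

lemma sqrt_ne_zero {w : ℂ} (hw : ‖w‖ < 1) : (1 - w) ^ ((1:ℂ)/2) ≠ 0 := by
  rw [Ne, Complex.cpow_eq_zero_iff]
  push_neg
  intro h; exact absurd h (one_sub_ne_zero hw)

lemma gfun_sq {w : ℂ} (hw : ‖w‖ < 1) : gfun w * gfun w = (1 - w)⁻¹ := by
  unfold gfun
  rw [tsum_mul_tsum_eq_tsum_sum_range_of_summable_norm (bch_summable_norm hw)
    (bch_summable_norm hw)]
  have : ∀ n : ℕ, ∑ k ∈ Finset.range (n+1),
      (binomCoeffHalf k * w ^ k) * (binomCoeffHalf (n-k) * w ^ (n-k)) = w ^ n := by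
    intro n
    have : ∀ k ∈ Finset.range (n+1),
        (binomCoeffHalf k * w ^ k) * (binomCoeffHalf (n-k) * w ^ (n-k))
        = (binomCoeffHalf k * binomCoeffHalf (n-k)) * w ^ n := by
      intro k hk
      have hk' : k ≤ n := Nat.lt_succ_iff.mp (Finset.mem_range.mp hk)
      rw [show w ^ n = w ^ k * w ^ (n - k) by rw [← pow_add]; congr 1; omega]
      ring
    rw [Finset.sum_congr rfl this, ← Finset.sum_mul, bch_sum n, one_mul]
  rw [tsum_congr this, tsum_geometric_of_norm_lt_one hw]

lemma gfun_contOn : ContinuousOn gfun (Metric.ball (0:ℂ) 1) := by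
  intro w hw
  apply ContinuousAt.continuousWithinAt
  rw [Metric.mem_ball, dist_zero_right] at hw
  set ρ : ℝ := (‖w‖ + 1) / 2 with hρ
  have hρ1 : ρ < 1 := by rw [hρ]; linarith
  have hρ0 : 0 ≤ ρ := by rw [hρ]; positivity
  have hwρ : ‖w‖ < ρ := by rw [hρ]; linarith
  have hcont : ContinuousOn gfun (Metric.closedBall (0:ℂ) ρ) := by
    apply TendstoUniformlyOn.continuousOn
      (tendstoUniformlyOn_tsum (u := fun k => ρ ^ k)
        (summable_geometric_of_lt_one hρ0 hρ1) ?_)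
    · apply Filter.Eventually.frequently
      filter_upwards with t
      apply continuousOn_finset_sum
      intro k _
      exact (continuous_const.mul (continuous_pow k)).continuousOn
    · intro k x hx
      rw [Metric.mem_closedBall, dist_zero_right] at hx
      rw [norm_mul, norm_pow]
      calc ‖binomCoeffHalf k‖ * ‖x‖ ^ k ≤ 1 * ρ ^ k := by
            apply mul_le_mul (bch_norm_le_one k) (pow_le_pow_left₀ (norm_nonneg _) hx k)
              (by positivity) one_pos.le
        _ = ρ ^ k := one_mul _
  exact hcont.continuousAt (Metric.closedBall_mem_nhds_of_mem
    (by rw [Metric.mem_ball, dist_zero_right]; exact hwρ))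

lemma gfun_eq_cpow {w : ℂ} (hw : ‖w‖ < 1) :
    gfun w = ((1 - w) ^ ((1:ℂ)/2))⁻¹ := by
  set Q : ℂ → ℂ := fun z => (1 - z) ^ ((1:ℂ)/2) * gfun z with hQ
  have hball : ∀ z ∈ Metric.ball (0:ℂ) 1, ‖z‖ < 1 := by
    intro z hz; rwa [Metric.mem_ball, dist_zero_right] at hz
  have hQsq : ∀ z ∈ Metric.ball (0:ℂ) 1, Q z = 1 ∨ Q z = -1 := by
    intro z hz
    have hz' := hball z hz
    rw [← mul_self_eq_one_iff, hQ]
    calc (1 - z) ^ ((1:ℂ)/2) * gfun z * ((1 - z) ^ ((1:ℂ)/2) * gfun z)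
        = ((1 - z) ^ ((1:ℂ)/2) * (1 - z) ^ ((1:ℂ)/2)) * (gfun z * gfun z) := by ring
      _ = (1 - z) * (1 - z)⁻¹ := by rw [sqrt_mul_self hz', gfun_sq hz']
      _ = 1 := mul_inv_cancel₀ (one_sub_ne_zero hz')
  have hQcont : ContinuousOn Q (Metric.ball (0:ℂ) 1) := by
    apply ContinuousOn.mul ?_ gfun_contOn
    intro z hz
    apply ContinuousAt.continuousWithinAt
    show ContinuousAt ((fun y : ℂ => y ^ ((1:ℂ)/2)) ∘ (fun x : ℂ => 1 - x)) z
    exact ContinuousAt.comp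
      (continuousAt_cpow_const
        (Complex.mem_slitPlane_iff.mpr (Or.inl (one_sub_re_pos (hball z hz)))))
      ((continuous_const.sub continuous_id).continuousAt)
  have hQ0 : Q 0 = 1 := by
    have hg0 : gfun 0 = 1 := by
      unfold gfun
      rw [tsum_eq_single 0 (fun k hk => by simp [zero_pow hk])]
      simp [bch_zero]
    rw [hQ]; simp [hg0]
  have hsub : Metric.ball (0:ℂ) 1 ⊆
      (Metric.ball (0:ℂ) 1 ∩ Q ⁻¹' (Metric.ball (1:ℂ) 1)) ∪
      (Metric.ball (0:ℂ) 1 ∩ Q ⁻¹' (Metric.ball (-1:ℂ) 1)) := by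
    intro z hz
    rcases hQsq z hz with h | h
    · left; exact ⟨hz, by simp [h, Metric.mem_ball]⟩
    · right; exact ⟨hz, by simp [h, Metric.mem_ball]⟩
  have hdisj : Disjoint (Metric.ball (0:ℂ) 1 ∩ Q ⁻¹' (Metric.ball (1:ℂ) 1))
      (Metric.ball (0:ℂ) 1 ∩ Q ⁻¹' (Metric.ball (-1:ℂ) 1)) := by
    rw [Set.disjoint_iff]
    rintro z ⟨⟨_, h1⟩, ⟨_, h2⟩⟩
    simp only [Set.mem_preimage, Metric.mem_ball] at h1 h2
    have : dist (1:ℂ) (-1) ≤ dist (1:ℂ) (Q z) + dist (Q z) (-1) := dist_triangle _ _ _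
    rw [dist_comm (1:ℂ) (Q z)] at this
    have h3 : dist (1:ℂ) (-1:ℂ) = 2 := by
      rw [Complex.dist_eq]; norm_num
    rw [h3] at this; exfalso; linarith
  have hopen1 : IsOpen (Metric.ball (0:ℂ) 1 ∩ Q ⁻¹' (Metric.ball (1:ℂ) 1)) :=
    hQcont.isOpen_inter_preimage Metric.isOpen_ball Metric.isOpen_ball
  have hopen2 : IsOpen (Metric.ball (0:ℂ) 1 ∩ Q ⁻¹' (Metric.ball (-1:ℂ) 1)) :=
    hQcont.isOpen_inter_preimage Metric.isOpen_ball Metric.isOpen_ball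
  have hne : (Metric.ball (0:ℂ) 1 ∩
      (Metric.ball (0:ℂ) 1 ∩ Q ⁻¹' (Metric.ball (1:ℂ) 1))).Nonempty := by
    refine ⟨0, by simp, by simp, ?_⟩
    simp [hQ0, Metric.mem_ball]
  have hpre : IsPreconnected (Metric.ball (0:ℂ) 1) := (convex_ball (0:ℂ) 1).isPreconnected
  have hsubA := hpre.subset_left_of_subset_union hopen1 hopen2 hdisj hsub hne
  have hwball : w ∈ Metric.ball (0:ℂ) 1 := by
    rw [Metric.mem_ball, dist_zero_right]; exact hw
  have hQw : Q w = 1 := by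
    rcases hQsq w hwball with h | h
    · exact h
    · exfalso
      have := hsubA hwball
      rcases this with ⟨_, hmem⟩
      simp only [Set.mem_preimage, Metric.mem_ball, h] at hmem
      rw [Complex.dist_eq] at hmem; norm_num at hmem
  have hmul : (1 - w) ^ ((1:ℂ)/2) * gfun w = 1 := hQw
  exact eq_inv_of_mul_eq_one_right hmul

lemma gfun_eq_cpow' {w : ℂ} (hw : ‖w‖ < 1) :
    ∑' k, binomCoeffHalf k * w ^ k = ((1 - w) ^ ((1:ℂ)/2))⁻¹ :=
  gfun_eq_cpow hw


lemma int_exp_eq (m : ℕ) (hm : 1 ≤ m) (n : ℤ) (hn : n ≠ 0) :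
    ∫ t in (0:ℝ)..(2*π*m), Complex.exp ((Complex.I * n / m) * t) = 0 := by
  have hm0 : (m:ℂ) ≠ 0 := Nat.cast_ne_zero.2 (by omega)
  have hn0 : (n:ℂ) ≠ 0 := Int.cast_ne_zero.2 hn
  have hc : (Complex.I * n / m) ≠ 0 := by
    exact div_ne_zero (mul_ne_zero Complex.I_ne_zero hn0) hm0
  rw [integral_exp_mul_complex hc]
  have h1 : (Complex.I * n / m) * ((2*π*m : ℝ):ℂ) = n * (2*π*Complex.I) := by
    push_cast
    field_simp
  rw [h1, Complex.exp_int_mul_two_pi_mul_I]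
  simp

lemma cexp_cont (c : ℂ) : Continuous (fun t : ℝ => Complex.exp (c * t)) :=
  Complex.continuous_exp.comp (continuous_const.mul Complex.continuous_ofReal)

lemma sin_exp_integral (m : ℕ) (hm : 1 ≤ m) (k : ℕ) :
    ∫ t in (0:ℝ)..(2*π*m), Complex.exp ((Complex.I * k / m) * t) * Complex.sin t
    = if k = m then (π * m) * Complex.I else 0 := by
  have hm0 : (m:ℂ) ≠ 0 := Nat.cast_ne_zero.2 (by omega)
  set n₁ : ℤ := (k:ℤ) + m with hn₁
  set n₂ : ℤ := (k:ℤ) - m with hn₂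
  have key : ∀ t : ℝ, Complex.exp ((Complex.I * k / m) * t) * Complex.sin t
      = (Complex.exp ((Complex.I * n₂ / m) * t) - Complex.exp ((Complex.I * n₁ / m) * t))
        * (Complex.I/2) := by
    intro t
    have e1 : (Complex.I * (k:ℂ) / m) * t + (-(t:ℂ) * Complex.I) = (Complex.I * n₂ / m) * t := by
      rw [hn₂]; push_cast; field_simp; ring
    have e2 : (Complex.I * (k:ℂ) / m) * t + ((t:ℂ) * Complex.I) = (Complex.I * n₁ / m) * t := by
      rw [hn₁]; push_cast; field_simp
    calc Complex.exp ((Complex.I * k / m) * t) * Complex.sin t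
        = Complex.exp ((Complex.I * k / m) * t) *
            ((Complex.exp (-(t:ℂ) * Complex.I) - Complex.exp ((t:ℂ) * Complex.I))
              * Complex.I / 2) := by rw [Complex.sin]
      _ = (Complex.exp ((Complex.I * (k:ℂ) / m) * t + (-(t:ℂ) * Complex.I))
            - Complex.exp ((Complex.I * (k:ℂ) / m) * t + ((t:ℂ) * Complex.I))) * (Complex.I/2) := by
          rw [Complex.exp_add, Complex.exp_add]; ring
      _ = _ := by rw [e1, e2]
  rw [intervalIntegral.integral_congr (g := fun t : ℝ =>
    (Complex.exp ((Complex.I * n₂ / m) * t) - Complex.exp ((Complex.I * n₁ / m) * t))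
      * (Complex.I/2)) (fun t _ => key t)]
  rw [intervalIntegral.integral_mul_const, intervalIntegral.integral_sub
    ((cexp_cont _).intervalIntegrable _ _) ((cexp_cont _).intervalIntegrable _ _)]
  have hn₁0 : n₁ ≠ 0 := by omega
  have hint1 : ∫ t in (0:ℝ)..(2*π*m), Complex.exp ((Complex.I * n₁ / m) * t) = 0 :=
    int_exp_eq m hm n₁ hn₁0
  by_cases hk : k = m
  · subst hk
    have hn₂0 : n₂ = 0 := by omega
    have : ∫ t in (0:ℝ)..(2*π*k), Complex.exp ((Complex.I * n₂ / k) * t)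
        = ((2*π*k : ℝ):ℂ) := by
      rw [hn₂0]
      simp
    rw [this, hint1, if_pos rfl]
    push_cast
    ring
  · have hn₂0 : n₂ ≠ 0 := by omega
    rw [int_exp_eq m hm n₂ hn₂0, hint1, if_neg hk]
    ring

lemma norm_exp_I_t_div (m : ℕ) (hm : 1 ≤ m) (t : ℝ) :
    ‖Complex.exp (Complex.I * t / m)‖ = 1 := by
  have : Complex.I * (t:ℂ) / (m:ℂ) = ((t / m : ℝ) : ℂ) * Complex.I := by push_cast; ring
  rw [this, Complex.norm_exp_ofReal_mul_I]

lemma Fk_cont (m : ℕ) (u : ℂ) (k : ℕ) :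
    Continuous (fun t : ℝ =>
      binomCoeffHalf k * (u * Complex.exp (Complex.I * t / m)) ^ k * Complex.sin t) := by
  apply Continuous.mul
  · apply Continuous.mul continuous_const
    apply Continuous.pow
    apply Continuous.mul continuous_const
    exact Complex.continuous_exp.comp (by fun_prop)
  · exact Complex.continuous_sin.comp Complex.continuous_ofReal

lemma Fk_norm_le (m : ℕ) (hm : 1 ≤ m) (u : ℂ) (k : ℕ) (t : ℝ) :
    ‖binomCoeffHalf k * (u * Complex.exp (Complex.I * t / m)) ^ k * Complex.sin t‖
      ≤ ‖u‖ ^ k := by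
  rw [norm_mul, norm_mul, norm_pow, norm_mul, norm_exp_I_t_div m hm, mul_one]
  have hsin : ‖Complex.sin (t:ℂ)‖ ≤ 1 := by
    rw [← Complex.ofReal_sin, Complex.norm_real, Real.norm_eq_abs, abs_le]
    exact ⟨Real.neg_one_le_sin t, Real.sin_le_one t⟩
  calc ‖binomCoeffHalf k‖ * ‖u‖ ^ k * ‖Complex.sin (t:ℂ)‖
      ≤ 1 * ‖u‖ ^ k * 1 := by
        apply mul_le_mul _ hsin (norm_nonneg _) (by positivity)
        exact mul_le_mul_of_nonneg_right (bch_norm_le_one k) (by positivity)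
    _ = ‖u‖ ^ k := by ring

lemma integral_swap_eval (m : ℕ) (hm : 1 ≤ m) (u : ℂ) (hu : ‖u‖ < 1) :
    ∫ t in (0:ℝ)..(2*π*m), (∑' k, binomCoeffHalf k *
        (u * Complex.exp (Complex.I * t / m)) ^ k * Complex.sin t)
    = ∑' k, ∫ t in (0:ℝ)..(2*π*m),
        binomCoeffHalf k * (u * Complex.exp (Complex.I * t / m)) ^ k * Complex.sin t := by
  have hL : (0:ℝ) ≤ 2*π*m := by positivity
  have hmeas : ∀ k : ℕ, MeasureTheory.IntegrableOn (fun t : ℝ =>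
      binomCoeffHalf k * (u * Complex.exp (Complex.I * t / m)) ^ k * Complex.sin t)
      (Set.Ioc 0 (2*π*m)) := fun k => (Fk_cont m u k).integrableOn_Ioc
  simp only [intervalIntegral.integral_of_le hL]
  rw [← MeasureTheory.integral_tsum_of_summable_integral_norm hmeas ?_]
  · apply Summable.of_nonneg_of_le
      (fun k => MeasureTheory.integral_nonneg (fun t => norm_nonneg _))
      (fun k => ?_)
      (Summable.mul_left (2*π*m) (summable_geometric_of_lt_one (norm_nonneg u) hu))
    calc ∫ t in Set.Ioc (0:ℝ) (2*π*m), ‖binomCoeffHalf k *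
          (u * Complex.exp (Complex.I * t / m)) ^ k * Complex.sin t‖
        ≤ ∫ _t in Set.Ioc (0:ℝ) (2*π*m), ‖u‖ ^ k := by
          apply MeasureTheory.setIntegral_mono_on ((hmeas k).norm)
            (MeasureTheory.integrableOn_const (by simp [Real.volume_Ioc]))
            measurableSet_Ioc
          intro t _
          exact Fk_norm_le m hm u k t
      _ = (2*π*m) * ‖u‖ ^ k := by
          rw [MeasureTheory.setIntegral_const, MeasureTheory.measureReal_def, Real.volume_Ioc, smul_eq_mul]
          rw [sub_zero, ENNReal.toReal_ofReal hL]


lemma Fk_integral (m : ℕ) (hm : 1 ≤ m) (u : ℂ) (k : ℕ) :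
    (∫ t in (0:ℝ)..(2*π*m),
      binomCoeffHalf k * (u * Complex.exp (Complex.I * t / m)) ^ k * Complex.sin t)
    = binomCoeffHalf k * u ^ k * (if k = m then (π * m) * Complex.I else 0) := by
  have key : ∀ t : ℝ, binomCoeffHalf k * (u * Complex.exp (Complex.I * t / m)) ^ k * Complex.sin t
      = (binomCoeffHalf k * u ^ k) * (Complex.exp ((Complex.I * k / m) * t) * Complex.sin t) := by
    intro t
    rw [mul_pow, ← Complex.exp_nat_mul]
    have h : (k:ℂ) * (Complex.I * t / m) = (Complex.I * k / m) * t := by ring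
    rw [h]; ring
  rw [intervalIntegral.integral_congr (fun t _ => key t), intervalIntegral.integral_const_mul,
    sin_exp_integral m hm k]

lemma integrand_eq (m : ℕ) (hm : 1 ≤ m) (u : ℂ) (hu : ‖u‖ < 1) (t : ℝ) :
    Complex.sin t / ((1 - u * Complex.exp (Complex.I * t / m)) ^ ((1:ℂ)/2))
    = ∑' k, binomCoeffHalf k * (u * Complex.exp (Complex.I * t / m)) ^ k * Complex.sin t := by
  have hw : ‖u * Complex.exp (Complex.I * t / m)‖ < 1 := by
    rw [norm_mul, norm_exp_I_t_div m hm, mul_one]; exact hu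
  calc Complex.sin t / ((1 - u * Complex.exp (Complex.I * t / m)) ^ ((1:ℂ)/2))
      = (∑' k, binomCoeffHalf k * (u * Complex.exp (Complex.I * t / m)) ^ k) * Complex.sin t := by
        rw [div_eq_mul_inv, ← gfun_eq_cpow' hw, mul_comm]
    _ = _ := (tsum_mul_right).symm

/-- For a positive integer `m` and `u` in a disc of radius `r₁ < 1` around `0`, the function
`I(u) = -(i/m) ∫₀^{2πm} sin t / √(1 - u e^{it/m}) dt` equals `π b_m u^m = c u^m` with `c ≠ 0`. -/
theorem melnikov_integral_eq (m : ℕ) (hm : 1 ≤ m) (r₁ : ℝ) (hr₁ : 0 < r₁) (hr₁' : r₁ < 1) :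
    ∃ c : ℂ, c = (π : ℂ) * binomCoeffHalf m ∧ c ≠ 0 ∧
      ∀ u : ℂ, ‖u‖ < r₁ →
        -(Complex.I / (m : ℂ)) *
            ∫ t in (0:ℝ)..(2 * π * m),
              Complex.sin (t : ℂ) /
                ((1 - u * Complex.exp (Complex.I * (t : ℂ) / (m : ℂ))) ^ ((1:ℂ)/2))
          = c * u ^ m := by
  refine ⟨(π : ℂ) * binomCoeffHalf m, rfl,
    mul_ne_zero (Complex.ofReal_ne_zero.2 Real.pi_ne_zero) (bch_ne_zero m), ?_⟩
  intro u hu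
  have hu1 : ‖u‖ < 1 := lt_trans hu hr₁'
  have hm0 : (m:ℂ) ≠ 0 := Nat.cast_ne_zero.2 (by omega)
  rw [intervalIntegral.integral_congr (fun t _ => integrand_eq m hm u hu1 t),
    integral_swap_eval m hm u hu1]
  rw [tsum_congr (fun k => Fk_integral m hm u k)]
  rw [tsum_eq_single m (fun k hk => by rw [if_neg hk, mul_zero])]
  rw [if_pos rfl]
  have hI : Complex.I * Complex.I = -1 := Complex.I_mul_I
  field_simp
  ring_nf
  rw [Complex.I_sq]
  ring
end

section
/- Let ε ∈ ℂ with |ε - i/m| small enough that μ := min{|e^{2πkε} - 1| : 1 ≤ k ≤ m-1} > 0, and let u₀ ≠ 0 and a ∈ ℂ satisfy |a|·|I_{(k)}(u₀) + a·G_{(k)}(u₀)| < μ for all 1 ≤ k ≤ m-1, where the k-th iterate of P has the form P^k(u) = e^{2πkε}u + a·I_{(k)}(u)·u + a²·G_{(k)}(u)·u. Then P^k(u₀) ≠ u₀ for all 1 ≤ k ≤ m-1; hence if P^m(u₀) = u₀, the orbit u₀, P(u₀), ..., P^{m-1}(u₀) is genuinely periodic of period exactly m. -/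
open Real

/-- If `μ ≤ |e^{2πkε} - 1|` and `|a| |I_{(k)}(u₀) + a G_{(k)}(u₀)| < μ` for `1 ≤ k ≤ m-1`,
where `P^k(u) = e^{2πkε}u + a I_{(k)}(u) u + a² G_{(k)}(u) u`, then `P^k(u₀) ≠ u₀` for
`1 ≤ k ≤ m-1`; hence if `P^m(u₀) = u₀` the orbit of `u₀` is periodic of period exactly `m`. -/
theorem orbit_period_exactly_m (m : ℕ) (hm : 2 ≤ m) (ε a u₀ : ℂ) (hu₀ : u₀ ≠ 0)
    (μ : ℝ) (hμ : 0 < μ) (I G : ℕ → ℂ) (P : ℂ → ℂ)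
    (hμle : ∀ k : ℕ, 1 ≤ k → k ≤ m - 1 →
      μ ≤ ‖Complex.exp (2 * (π : ℂ) * k * ε) - 1‖)
    (hbound : ∀ k : ℕ, 1 ≤ k → k ≤ m - 1 → ‖a‖ * ‖I k + a * G k‖ < μ)
    (hP : ∀ k : ℕ, 1 ≤ k → k ≤ m - 1 →
      P^[k] u₀ = Complex.exp (2 * (π : ℂ) * k * ε) * u₀ + a * I k * u₀ + a ^ 2 * G k * u₀) :
    (∀ k : ℕ, 1 ≤ k → k ≤ m - 1 → P^[k] u₀ ≠ u₀) ∧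
    (P^[m] u₀ = u₀ → Function.minimalPeriod P u₀ = m) := by
  have key : ∀ k : ℕ, 1 ≤ k → k ≤ m - 1 → P^[k] u₀ ≠ u₀ := by
    intro k hk1 hk2 heq
    have h := hP k hk1 hk2
    rw [heq] at h
    have h2 : (Complex.exp (2 * (π : ℂ) * k * ε) - 1) * u₀
        = -((a * (I k + a * G k)) * u₀) := by
      have := h.symm
      ring_nf
      ring_nf at this
      linear_combination this
    have h3 : ‖Complex.exp (2 * (π : ℂ) * k * ε) - 1‖ * ‖u₀‖
        = ‖a‖ * ‖I k + a * G k‖ * ‖u₀‖ := by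
      calc ‖Complex.exp (2 * (π : ℂ) * k * ε) - 1‖ * ‖u₀‖
          = ‖(Complex.exp (2 * (π : ℂ) * k * ε) - 1) * u₀‖ := (norm_mul _ _).symm
        _ = ‖(a * (I k + a * G k)) * u₀‖ := by rw [h2, norm_neg]
        _ = ‖a‖ * ‖I k + a * G k‖ * ‖u₀‖ := by rw [norm_mul, norm_mul]
    have hu : (0:ℝ) < ‖u₀‖ := norm_pos_iff.mpr hu₀
    have := hμle k hk1 hk2
    have hlt := hbound k hk1 hk2
    nlinarith
  refine ⟨key, fun hper => ?_⟩
  have hPer : Function.IsPeriodicPt P m u₀ := hper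
  have hm0 : 0 < m := by omega
  have hle : Function.minimalPeriod P u₀ ≤ m := hPer.minimalPeriod_le hm0
  have hpos : 0 < Function.minimalPeriod P u₀ := hPer.minimalPeriod_pos hm0
  by_contra hne
  have hlt : Function.minimalPeriod P u₀ ≤ m - 1 := by omega
  exact key _ hpos hlt (Function.isPeriodicPt_minimalPeriod P u₀)
end
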